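/- Let ν be the Gaussian measure on ℝ³ with density (2πσ)^{−3/2} e^{−|x|²/(2σ)}, σ > 0, and let (r_j)_{j∈ℤ³} be independent, each with law ν. Then X₀ ∈ L^p(Ω) for every 1 ≤ p < ∞, but X₀ ∉ L^∞(Ω), i.e. for every N ≥ 1 one has P(X₀ ≥ N) > 0. -/

import Mathlib

open MeasureTheory ProbabilityTheory ENNReal

noncomputable section

/-- `ℝ³` with the Euclidean norm. -/
abbrev E3 := EuclideanSpace ℝ (Fin 3)

/-- The lattice point `j ∈ ℤ³` viewed in `ℝ³`. -/
def latt (j : Fin 3 → ℤ) : E3 := (EuclideanSpace.equiv (Fin 3) ℝ).symm (fun i => (j i : ℝ))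

/-- The semi-open unit cube `W = [-1/2, 1/2)³`. -/
def Wcube : Set E3 := {x | ∀ i, -(1:ℝ)/2 ≤ x i ∧ x i < 1/2}

/-- The number (in `[0,∞]`) of lattice points `j` whose perturbation `j + r_j(ω)` lies in `W`. -/
def X0 {Ω : Type*} (r : (Fin 3 → ℤ) → Ω → E3) (ω : Ω) : ℝ≥0∞ :=
  ({j : Fin 3 → ℤ | latt j + r j ω ∈ Wcube}.encard : ℝ≥0∞)

/-- The Gaussian measure on `ℝ³` with density `(2πσ)^{-3/2} e^{-|x|²/(2σ)}`. -/
def gaussMeasure (σ : ℝ) : Measure E3 :=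
  volume.withDensity
    (fun x => ENNReal.ofReal ((2 * Real.pi * σ) ^ (-(3:ℝ)/2) * Real.exp (-‖x‖ ^ 2 / (2 * σ))))

/-! ### Auxiliary lemmas -/

lemma latt_apply (j : Fin 3 → ℤ) (i : Fin 3) : latt j i = (j i : ℝ) := rfl

lemma norm_sq_eq (x : E3) : ‖x‖ ^ 2 = ∑ i, x i ^ 2 := by
  rw [EuclideanSpace.norm_eq, Real.sq_sqrt (Finset.sum_nonneg fun i _ => sq_nonneg _)] <;>
    simp [Real.norm_eq_abs, sq_abs]

lemma Wcube_eq : Wcube = (MeasurableEquiv.toLp 2 (Fin 3 → ℝ)).symm ⁻¹'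
    (Set.univ.pi fun _ => Set.Ico (-(1:ℝ)/2) (1/2)) := by
  ext x
  simp [Wcube, Set.mem_pi]

lemma measurableSet_Wcube : MeasurableSet Wcube := by
  rw [Wcube_eq]
  exact (MeasurableEquiv.measurable _) (MeasurableSet.univ_pi fun i => measurableSet_Ico)

lemma volume_Wcube : volume Wcube = 1 := by
  rw [Wcube_eq, (EuclideanSpace.volume_preserving_symm_measurableEquiv_toLp (Fin 3)).measure_preimage
    (MeasurableSet.univ_pi fun i => measurableSet_Ico).nullMeasurableSet]
  rw [volume_pi_pi]
  simp [Real.volume_Ico]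
  norm_num

/-- The set of perturbations `y` for which `j + y ∈ W`. -/
def Sset (j : Fin 3 → ℤ) : Set E3 := (fun y => latt j + y) ⁻¹' Wcube

lemma measurableSet_Sset (j : Fin 3 → ℤ) : MeasurableSet (Sset j) :=
  (measurable_const_add (latt j)) measurableSet_Wcube

lemma volume_Sset (j : Fin 3 → ℤ) : volume (Sset j) = 1 := by
  rw [Sset, measure_preimage_add, volume_Wcube]

lemma mem_Sset_lower {j : Fin 3 → ℤ} {y : E3} (hy : y ∈ Sset j) :
    ‖latt j‖ ^ 2 ≤ 4 * ‖y‖ ^ 2 := by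
  rw [norm_sq_eq, norm_sq_eq, Finset.mul_sum]
  refine Finset.sum_le_sum fun i _ => ?_
  have h := hy i
  simp only [PiLp.add_apply, latt_apply] at h
  rcases h with ⟨h1, h2⟩
  rw [latt_apply]
  rcases le_or_gt 1 ((j i : ℝ)) with hj | hj
  · nlinarith
  rcases le_or_gt ((j i : ℝ)) (-1) with hj' | hj'
  · nlinarith
  · have h1' : (-1:ℤ) < j i := by exact_mod_cast hj'
    have h2' : (j i : ℤ) < 1 := by exact_mod_cast hj
    have : j i = 0 := by omega
    rw [this]
    push_cast
    nlinarith

lemma mem_Sset_upper {j : Fin 3 → ℤ} {y : E3} (hy : y ∈ Sset j) :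
    ‖y‖ ^ 2 ≤ 2 * ‖latt j‖ ^ 2 + 6 := by
  rw [norm_sq_eq, norm_sq_eq, Finset.mul_sum]
  have h6 : (6:ℝ) = ∑ _i : Fin 3, 2 := by norm_num
  rw [h6, ← Finset.sum_add_distrib]
  refine Finset.sum_le_sum fun i _ => ?_
  have h := hy i
  simp only [PiLp.add_apply, latt_apply] at h
  rw [latt_apply]
  nlinarith [h.1, h.2, sq_nonneg ((j i:ℝ) + y i), sq_nonneg ((j i:ℝ) - 1), sq_nonneg ((j i:ℝ) + 1)]

/-- The normalizing constant of the Gaussian density. -/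
def gc (σ : ℝ) : ℝ := (2 * Real.pi * σ) ^ (-(3:ℝ)/2)

lemma gc_pos {σ : ℝ} (hσ : 0 < σ) : 0 < gc σ :=
  Real.rpow_pos_of_pos (by positivity) _

lemma measurable_dens (σ : ℝ) :
    Measurable fun x : E3 => ENNReal.ofReal (gc σ * Real.exp (-‖x‖ ^ 2 / (2 * σ))) := by
  apply Measurable.ennreal_ofReal
  fun_prop

lemma gauss_apply (σ : ℝ) (j : Fin 3 → ℤ) :
    gaussMeasure σ (Sset j)
      = ∫⁻ x in Sset j, ENNReal.ofReal (gc σ * Real.exp (-‖x‖ ^ 2 / (2 * σ))) := by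
  rw [gaussMeasure, withDensity_apply _ (measurableSet_Sset j)]
  rfl

lemma gauss_upper {σ : ℝ} (hσ : 0 < σ) (j : Fin 3 → ℤ) :
    gaussMeasure σ (Sset j)
      ≤ ENNReal.ofReal (gc σ) * ENNReal.ofReal (Real.exp (-(1/(8*σ)) * ‖latt j‖ ^ 2)) := by
  rw [gauss_apply, ← ENNReal.ofReal_mul (gc_pos hσ).le]
  calc ∫⁻ x in Sset j, ENNReal.ofReal (gc σ * Real.exp (-‖x‖ ^ 2 / (2 * σ)))
      ≤ ∫⁻ _x in Sset j, ENNReal.ofReal (gc σ * Real.exp (-(1/(8*σ)) * ‖latt j‖ ^ 2)) := by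
        refine setLIntegral_mono measurable_const fun x hx => ?_
        apply ENNReal.ofReal_le_ofReal
        apply mul_le_mul_of_nonneg_left _ (gc_pos hσ).le
        apply Real.exp_le_exp.2
        have h := mem_Sset_lower hx
        rw [neg_div, neg_mul, neg_le_neg_iff]
        have e1 : (1/(8*σ)) * ‖latt j‖ ^ 2 = ‖latt j‖ ^ 2 / (8*σ) := by ring
        rw [e1, div_le_div_iff₀ (by positivity) (by positivity)]
        nlinarith
    _ = ENNReal.ofReal (gc σ * Real.exp (-(1/(8*σ)) * ‖latt j‖ ^ 2)) := by
        rw [setLIntegral_const, volume_Sset, mul_one]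

lemma gauss_lower {σ : ℝ} (hσ : 0 < σ) (j : Fin 3 → ℤ) :
    0 < gaussMeasure σ (Sset j) := by
  rw [gauss_apply]
  calc (0:ℝ≥0∞) < ENNReal.ofReal (gc σ * Real.exp (-(2 * ‖latt j‖ ^ 2 + 6) / (2 * σ))) := by
        exact ENNReal.ofReal_pos.2 (mul_pos (gc_pos hσ) (Real.exp_pos _))
    _ = ∫⁻ _x in Sset j, ENNReal.ofReal (gc σ * Real.exp (-(2 * ‖latt j‖ ^ 2 + 6) / (2 * σ))) := by
        rw [setLIntegral_const, volume_Sset, mul_one]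
    _ ≤ ∫⁻ x in Sset j, ENNReal.ofReal (gc σ * Real.exp (-‖x‖ ^ 2 / (2 * σ))) := by
        refine setLIntegral_mono (measurable_dens σ) fun x hx => ?_
        apply ENNReal.ofReal_le_ofReal
        apply mul_le_mul_of_nonneg_left _ (gc_pos hσ).le
        apply Real.exp_le_exp.2
        have h := mem_Sset_upper hx
        rw [div_le_div_iff_of_pos_right (by positivity)]
        nlinarith

/-! ### Summability of Gaussian weights over the lattice -/

lemma int_exp_le {c : ℝ} (hc : 0 < c) (k : ℤ) :
    ENNReal.ofReal (Real.exp (-c * (k:ℝ) ^ 2)) ≤ ENNReal.ofReal (Real.exp (-c)) ^ k.natAbs := by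
  rw [← ENNReal.ofReal_pow (Real.exp_nonneg _), ← Real.exp_nat_mul]
  apply ENNReal.ofReal_le_ofReal
  apply Real.exp_le_exp.2
  have hn : (k.natAbs : ℝ) ≤ (k.natAbs : ℝ) ^ 2 := by
    exact_mod_cast Nat.le_self_pow two_ne_zero k.natAbs
  have e : ((k.natAbs : ℝ)) ^ 2 = (k:ℝ) ^ 2 := by rw [Nat.cast_natAbs, Int.cast_abs, sq_abs]
  nlinarith

lemma tsum_int_exp {c : ℝ} (hc : 0 < c) :
    ∑' k : ℤ, ENNReal.ofReal (Real.exp (-c * (k:ℝ) ^ 2)) ≠ ⊤ := by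
  set x := ENNReal.ofReal (Real.exp (-c)) with hx
  have hx1 : x < 1 := by
    rw [hx, ← ENNReal.ofReal_one]
    exact (ENNReal.ofReal_lt_ofReal_iff one_pos).2 (Real.exp_lt_one_iff.2 (by linarith))
  have hgeom : ∑' n : ℕ, x ^ n ≠ ⊤ := by
    rw [ENNReal.tsum_geometric]
    simp [ENNReal.inv_ne_top, tsub_eq_zero_iff_le, hx1.not_ge]
  have key : ∀ F : ℕ → ℤ, (∀ n, n ≤ (F n).natAbs) →
      ∑' n : ℕ, ENNReal.ofReal (Real.exp (-c * ((F n : ℤ):ℝ) ^ 2)) ≠ ⊤ := by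
    intro F hF
    refine ne_top_of_le_ne_top hgeom (ENNReal.tsum_le_tsum fun n => ?_)
    refine le_trans (int_exp_le hc (F n)) ?_
    exact pow_le_pow_right_of_le_one' hx1.le (hF n)
  have : (fun k : ℤ => ENNReal.ofReal (Real.exp (-c * (k:ℝ) ^ 2)))
      = Int.rec (fun n : ℕ => ENNReal.ofReal (Real.exp (-c * ((n:ℤ):ℝ) ^ 2)))
                (fun n : ℕ => ENNReal.ofReal (Real.exp (-c * ((Int.negSucc n : ℤ):ℝ) ^ 2))) := by
    funext k; cases k <;> rfl
  rw [this, tsum_int_rec ENNReal.summable ENNReal.summable]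
  exact ENNReal.add_ne_top.2 ⟨key _ (fun n => by simp), key _ (fun n => Nat.le_succ n)⟩

/-- An explicit equivalence `(Fin 3 → ℤ) ≃ ℤ × ℤ × ℤ`. -/
def e3equiv : (Fin 3 → ℤ) ≃ ℤ × ℤ × ℤ where
  toFun j := (j 0, j 1, j 2)
  invFun p := ![p.1, p.2.1, p.2.2]
  left_inv j := by funext i; fin_cases i <;> rfl
  right_inv p := rfl

lemma tsum_J3_exp {c : ℝ} (hc : 0 < c) :
    ∑' j : Fin 3 → ℤ, ENNReal.ofReal (Real.exp (-c * ∑ i, ((j i : ℝ)) ^ 2)) ≠ ⊤ := by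
  set g : ℤ → ℝ≥0∞ := fun k => ENNReal.ofReal (Real.exp (-c * (k:ℝ) ^ 2)) with hg
  set T := ∑' k : ℤ, g k with hT
  have hTne : T ≠ ⊤ := tsum_int_exp hc
  set F : (Fin 3 → ℤ) → ℝ≥0∞ :=
    fun j => ENNReal.ofReal (Real.exp (-c * ∑ i, ((j i : ℝ)) ^ 2)) with hF
  have key : ∀ p : ℤ × ℤ × ℤ, F (e3equiv.symm p) = g p.1 * g p.2.1 * g p.2.2 := by
    rintro ⟨a, b, cc⟩
    have h0 : (e3equiv.symm (a, b, cc)) = ![a, b, cc] := rfl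
    rw [hF, h0, hg]
    simp only [Fin.sum_univ_three]
    have h1 : ![a, b, cc] 0 = a := rfl
    have h2 : ![a, b, cc] 1 = b := rfl
    have h3 : ![a, b, cc] 2 = cc := rfl
    rw [h1, h2, h3, ← ENNReal.ofReal_mul (Real.exp_nonneg _),
      ← ENNReal.ofReal_mul (mul_nonneg (Real.exp_nonneg _) (Real.exp_nonneg _)),
      ← Real.exp_add, ← Real.exp_add]
    ring_nf
  have hprod : ∑' j : Fin 3 → ℤ, F j = T * (T * T) := by
    rw [← Equiv.tsum_eq e3equiv.symm F]
    calc ∑' p : ℤ × ℤ × ℤ, F (e3equiv.symm p)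
        = ∑' (a : ℤ) (q : ℤ × ℤ), F (e3equiv.symm (a, q)) := ENNReal.tsum_prod'
      _ = ∑' (a : ℤ) (b : ℤ) (cc : ℤ), F (e3equiv.symm (a, (b, cc))) := by
          refine tsum_congr fun a => ?_; exact ENNReal.tsum_prod'
      _ = ∑' (a : ℤ) (b : ℤ) (cc : ℤ), (g a * g b) * g cc := by
          refine tsum_congr fun a => tsum_congr fun b => tsum_congr fun cc => key (a, (b, cc))
      _ = ∑' (a : ℤ) (b : ℤ), (g a * g b) * T := by
          refine tsum_congr fun a => tsum_congr fun b => ?_; exact ENNReal.tsum_mul_left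
      _ = ∑' (a : ℤ), g a * (T * T) := by
          refine tsum_congr fun a => ?_
          simp_rw [mul_assoc]
          rw [ENNReal.tsum_mul_left, ENNReal.tsum_mul_right]
      _ = T * (T * T) := ENNReal.tsum_mul_right
  rw [hF] at hprod
  rw [hprod]
  exact ENNReal.mul_ne_top hTne (ENNReal.mul_ne_top hTne hTne)

lemma tsum_latt_exp {c : ℝ} (hc : 0 < c) :
    ∑' j : Fin 3 → ℤ, ENNReal.ofReal (Real.exp (-c * ‖latt j‖ ^ 2)) ≠ ⊤ := by
  have h : ∀ j : Fin 3 → ℤ, ‖latt j‖ ^ 2 = ∑ i, ((j i : ℝ)) ^ 2 := by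
    intro j; rw [norm_sq_eq]; rfl
  simp_rw [h]
  exact tsum_J3_exp hc

/-! ### The counting function as a sum of indicators -/

lemma X0_eq_tsum {Ω : Type*} (r : (Fin 3 → ℤ) → Ω → E3) (ω : Ω) :
    X0 r ω = ∑' j : Fin 3 → ℤ, (r j ⁻¹' Sset j).indicator (fun _ => (1:ℝ≥0∞)) ω := by
  rw [X0, ← ENNReal.tsum_set_one,
    tsum_subtype {j : Fin 3 → ℤ | latt j + r j ω ∈ Wcube} (fun _ => (1:ℝ≥0∞))]
  refine tsum_congr fun j => ?_
  by_cases h : latt j + r j ω ∈ Wcube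
  · rw [Set.indicator_of_mem (by exact h), Set.indicator_of_mem (by exact h)]
  · rw [Set.indicator_of_notMem (by exact h), Set.indicator_of_notMem (by exact h)]

/-! ### Main theorem -/

/-- **Gaussian perturbations I.** If the `r_j` are independent, each with the
Gaussian law of variance `σ > 0`, then `X₀ ∈ L^p(Ω)` for every `1 ≤ p < ∞`, but
`X₀ ∉ L^∞(Ω)`: for every `N ≥ 1` one has `P(X₀ ≥ N) > 0`. -/
theorem gaussian_X0_in_all_Lp_not_Linfty
    (σ : ℝ) (hσ : 0 < σ)
    {Ω : Type*} [MeasurableSpace Ω] (P : Measure Ω) [IsProbabilityMeasure P]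
    (r : (Fin 3 → ℤ) → Ω → E3) (hmeas : ∀ j, Measurable (r j))
    (hindep : iIndepFun r P)
    (hlaw : ∀ j, P.map (r j) = gaussMeasure σ) :
    (∀ p : ℝ, 1 ≤ p → ∫⁻ ω, X0 r ω ^ p ∂P < ⊤) ∧
      ∀ N : ℕ, 1 ≤ N → 0 < P {ω | (N : ℝ≥0∞) ≤ X0 r ω} := by
  classical
  set A : (Fin 3 → ℤ) → Set Ω := fun j => r j ⁻¹' Sset j with hA
  have hAmeas : ∀ j, MeasurableSet (A j) := fun j => (hmeas j) (measurableSet_Sset j)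
  have hPA : ∀ j, P (A j) = gaussMeasure σ (Sset j) := by
    intro j
    rw [hA, ← Measure.map_apply (hmeas j) (measurableSet_Sset j), hlaw j]
  constructor
  · -- Part 1 : all moments are finite
    have main : ∀ p : ℝ, 1 < p → ∫⁻ ω, X0 r ω ^ p ∂P < ⊤ := by
      intro p hlt
      have hppos : (0:ℝ) < p := lt_trans one_pos hlt
      set q : ℝ := p.conjExponent with hq
      have hpq : p.HolderConjugate q := Real.HolderConjugate.conjExponent hlt
      have hqpos : (0:ℝ) < q := hpq.symm.pos
      set c : ℝ := 1/(8*σ*p) with hc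
      have hcpos : 0 < c := by rw [hc]; positivity
      set lam : (Fin 3 → ℤ) → ℝ≥0∞ :=
        fun j => ENNReal.ofReal (Real.exp (-c * ‖latt j‖ ^ 2)) with hlam
      have hlam_pos : ∀ j, lam j ≠ 0 := fun j => (ENNReal.ofReal_pos.2 (Real.exp_pos _)).ne'
      have hlam_top : ∀ j, lam j ≠ ⊤ := fun j => ENNReal.ofReal_ne_top
      set Ssum : ℝ≥0∞ := ∑' j, lam j with hSsum
      have hSfin : Ssum ≠ ⊤ := tsum_latt_exp hcpos
      have hlam_pow : ∀ j, lam j ^ p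
          = ENNReal.ofReal (Real.exp (-(1/(8*σ)) * ‖latt j‖ ^ 2)) := by
        intro j
        rw [hlam, ENNReal.ofReal_rpow_of_pos (Real.exp_pos _), ← Real.exp_mul]
        congr 1
        rw [hc]
        field_simp
      have hPAle : ∀ j, P (A j) ≤ ENNReal.ofReal (gc σ) * lam j ^ p := by
        intro j; rw [hlam_pow j, hPA j]; exact gauss_upper hσ j
      have hlam_ne_top' : ∀ j, lam j ^ (1 - p) ≠ ⊤ := by
        intro j
        rw [hlam, ENNReal.ofReal_rpow_of_pos (Real.exp_pos _)]
        exact ENNReal.ofReal_ne_top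
      set a : (Fin 3 → ℤ) → Ω → ℝ≥0∞ := fun j => (A j).indicator (1 : Ω → ℝ≥0∞) with ha
      have haX : ∀ ω, X0 r ω = ∑' j, a j ω := fun ω => X0_eq_tsum r ω
      have hameas : ∀ j, Measurable (a j) := fun j => measurable_const.indicator (hAmeas j)
      have ha_pow : ∀ j ω, a j ω ^ p = a j ω := by
        intro j ω
        by_cases hω : ω ∈ A j
        · rw [ha]; simp only [Set.indicator_of_mem hω]; exact ENNReal.one_rpow p
        · rw [ha]; simp only [Set.indicator_of_notMem hω]
          exact ENNReal.zero_rpow_of_pos hppos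
      -- the pointwise Hölder bound
      have hpt : ∀ ω, X0 r ω ^ p ≤ (∑' j, a j ω * lam j ^ (1 - p)) * Ssum ^ (p / q) := by
        intro ω
        set f : (Fin 3 → ℤ) → ℝ≥0∞ := fun j => a j ω * lam j ^ (-(1/q)) with hf
        set g : (Fin 3 → ℤ) → ℝ≥0∞ := fun j => lam j ^ (1/q) with hgdef
        have hfg : ∀ j, (f * g) j = a j ω := by
          intro j
          show a j ω * lam j ^ (-(1/q)) * lam j ^ (1/q) = a j ω
          rw [mul_assoc, ← ENNReal.rpow_add _ _ (hlam_pos j) (hlam_top j)]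
          simp
        have hholder := ENNReal.lintegral_mul_le_Lp_mul_Lq (Measure.count) hpq
          (measurable_of_countable f).aemeasurable (measurable_of_countable g).aemeasurable
        rw [lintegral_count, lintegral_count, lintegral_count] at hholder
        have h1 : ∑' j, (f * g) j = X0 r ω := by
          rw [haX ω]; exact tsum_congr hfg
        have hfp : ∀ j, f j ^ p = a j ω * lam j ^ (1 - p) := by
          intro j
          rw [hf]
          show (a j ω * lam j ^ (-(1/q))) ^ p = a j ω * lam j ^ (1 - p)
          rw [ENNReal.mul_rpow_of_nonneg _ _ hppos.le, ha_pow j ω, ← ENNReal.rpow_mul]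
          congr 2
          have hqp : 1/p + 1/q = 1 := by
            rw [one_div, one_div]; exact hpq.inv_add_inv_eq_one
          have hpq2 : p * q = p + q := hpq.mul_eq_add
          field_simp
          nlinarith [hpq2]
        have hgq : ∀ j, g j ^ q = lam j := by
          intro j
          rw [hgdef]
          show (lam j ^ (1/q)) ^ q = lam j
          rw [← ENNReal.rpow_mul, one_div, inv_mul_cancel₀ hqpos.ne', ENNReal.rpow_one]
        calc X0 r ω ^ p = (∑' j, (f * g) j) ^ p := by rw [h1]
          _ ≤ ((∑' j, f j ^ p) ^ (1/p) * (∑' j, g j ^ q) ^ (1/q)) ^ p :=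
              ENNReal.rpow_le_rpow hholder hppos.le
          _ = (∑' j, f j ^ p) * (∑' j, g j ^ q) ^ (p/q) := by
              rw [ENNReal.mul_rpow_of_nonneg _ _ hppos.le, ← ENNReal.rpow_mul,
                ← ENNReal.rpow_mul, one_div, inv_mul_cancel₀ hppos.ne', ENNReal.rpow_one,
                one_div, inv_mul_eq_div]
          _ = (∑' j, a j ω * lam j ^ (1 - p)) * Ssum ^ (p/q) := by
              rw [tsum_congr hfp, tsum_congr hgq]
      have hSpq_ne_top : Ssum ^ (p/q) ≠ ⊤ :=
        ENNReal.rpow_ne_top_of_nonneg (by positivity) hSfin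
      calc ∫⁻ ω, X0 r ω ^ p ∂P
          ≤ ∫⁻ ω, (∑' j, a j ω * lam j ^ (1 - p)) * Ssum ^ (p / q) ∂P := lintegral_mono hpt
        _ = (∑' j, P (A j) * lam j ^ (1 - p)) * Ssum ^ (p / q) := by
            rw [lintegral_mul_const' _ _ hSpq_ne_top]
            congr 1
            rw [lintegral_tsum (fun j => ((hameas j).mul_const _).aemeasurable)]
            refine tsum_congr fun j => ?_
            rw [lintegral_mul_const' _ _ (hlam_ne_top' j), lintegral_indicator_one (hAmeas j)]
        _ ≤ ((ENNReal.ofReal (gc σ)) * Ssum) * Ssum ^ (p / q) := by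
            refine mul_le_mul_left ?_ _
            calc ∑' j, P (A j) * lam j ^ (1 - p)
                ≤ ∑' j, (ENNReal.ofReal (gc σ) * lam j ^ p) * lam j ^ (1 - p) :=
                  ENNReal.tsum_le_tsum fun j => mul_le_mul_left (hPAle j) _
              _ = ∑' j, ENNReal.ofReal (gc σ) * lam j := by
                  refine tsum_congr fun j => ?_
                  rw [mul_assoc, ← ENNReal.rpow_add _ _ (hlam_pos j) (hlam_top j)]
                  norm_num
              _ = ENNReal.ofReal (gc σ) * Ssum := ENNReal.tsum_mul_left
        _ < ⊤ := by
            refine ENNReal.mul_lt_top ?_ ?_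
            · exact ENNReal.mul_lt_top ENNReal.ofReal_lt_top hSfin.lt_top
            · exact hSpq_ne_top.lt_top
    intro p hp
    have hstep : ∀ ω, X0 r ω ^ p ≤ 1 + X0 r ω ^ (p + 1) := by
      intro ω
      rcases le_or_gt (X0 r ω) 1 with hx | hx
      · exact le_add_right (ENNReal.rpow_le_one hx (by linarith)) -- check
      · exact le_add_left (ENNReal.rpow_le_rpow_of_exponent_le hx.le (by linarith))
    calc ∫⁻ ω, X0 r ω ^ p ∂P ≤ ∫⁻ ω, (1 + X0 r ω ^ (p + 1)) ∂P := lintegral_mono hstep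
      _ = 1 + ∫⁻ ω, X0 r ω ^ (p + 1) ∂P := by
          rw [lintegral_add_left measurable_const, lintegral_const, measure_univ, mul_one]
      _ < ⊤ := ENNReal.add_lt_top.2 ⟨ENNReal.one_lt_top, main (p + 1) (by linarith)⟩
  · -- Part 2
    intro N hN
    set jj : Fin N → (Fin 3 → ℤ) := fun k => fun i => if i = 0 then (k:ℤ) else 0 with hjj
    have hinj : Function.Injective jj := by
      intro k k' h
      have := congrFun h 0
      simp only [hjj, if_pos rfl] at this
      exact Fin.val_injective (by exact_mod_cast this)
    set S : Finset (Fin 3 → ℤ) := Finset.image jj Finset.univ with hS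
    have hcard : S.card = N := by
      rw [hS, Finset.card_image_of_injective _ hinj, Finset.card_univ, Fintype.card_fin]
    set B : Set Ω := ⋂ j ∈ S, A j with hB
    have hsub : B ⊆ {ω | (N : ℝ≥0∞) ≤ X0 r ω} := by
      intro ω hω
      have hSsub : (S : Set (Fin 3 → ℤ)) ⊆ {j | latt j + r j ω ∈ Wcube} := by
        intro j hj
        have : ω ∈ A j := by
          rw [hB] at hω
          exact Set.mem_iInter₂.1 hω j (by exact_mod_cast hj)
        exact this
      have h1 : (N : ℕ∞) ≤ {j | latt j + r j ω ∈ Wcube}.encard := by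
        calc (N : ℕ∞) = (S : Set (Fin 3 → ℤ)).encard := by
              rw [Set.encard_coe_eq_coe_finsetCard, hcard]
          _ ≤ _ := Set.encard_le_encard hSsub
      show (N : ℝ≥0∞) ≤ (({j : Fin 3 → ℤ | latt j + r j ω ∈ Wcube}.encard : ℕ∞) : ℝ≥0∞)
      exact_mod_cast ENat.toENNReal_le.2 h1
    have hBprob : P B = ∏ j ∈ S, P (A j) := by
      refine hindep.meas_biInter fun j _ => ?_
      exact ⟨Sset j, measurableSet_Sset j, rfl⟩
    have hBpos : 0 < P B := by
      rw [hBprob]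
      refine CanonicallyOrderedAdd.prod_pos.2 fun j _ => ?_
      rw [hPA j]
      exact gauss_lower hσ j
    exact lt_of_lt_of_le hBpos (measure_mono hsub)
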